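/- Let n, m ≥ 1, y ∈ ℝ^m, δ ∈ [0,1/2), and suppose for each nonzero integer d a pair (a_d, b_d) ∈ ℤ^m × ℕ with gcd(a_d, b_d) = 1 is given. For q ∈ ℤ^n \ {0} with gcd(q) = d, define Ã_{n,m}(q,δ) = {x ∈ [0,1)^{nm} : ∃p ∈ ℤ^m, |qx - p - y| < δ, gcd(q, b_d p + a_d) = 1}, and Ã_{1,m}(d,δ) = {x ∈ [0,1)^m : ∃p ∈ ℤ^m, |dx - p - y| < δ, gcd(d, b_d p + a_d) = 1}. Then |Ã_{n,m}(q,δ)| = |Ã_{1,m}(d,δ)|. -/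

import Mathlib

open MeasureTheory Set

-- pi of maps
lemma aux_map_pi {ι : Type*} [Fintype ι] {α β : ι → Type*} [∀ i, MeasurableSpace (α i)]
    [∀ i, MeasurableSpace (β i)] {f : ∀ i, α i → β i} (hf : ∀ i, Measurable (f i))
    {μ : ∀ i, Measure (α i)} [∀ i, SigmaFinite (μ i)]
    {ν : ∀ i, Measure (β i)} [∀ i, SigmaFinite (ν i)]
    (h : ∀ i, Measure.map (f i) (μ i) = ν i) :
    Measure.map (fun x i => f i (x i)) (Measure.pi μ) = Measure.pi ν := by
  refine (Measure.pi_eq fun s hs => ?_).symm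
  have hF : Measurable fun (x : ∀ i, α i) i => f i (x i) :=
    measurable_pi_lambda _ fun i => (hf i).comp (measurable_pi_apply i)
  rw [Measure.map_apply hF (MeasurableSet.univ_pi hs)]
  have hpre : (fun x i => f i (x i)) ⁻¹' Set.pi univ s = Set.pi univ fun i => f i ⁻¹' s i := by
    ext x; simp [Set.mem_pi]
  rw [hpre, Measure.pi_pi]
  refine Finset.prod_congr rfl fun i _ => ?_
  rw [← h i, Measure.map_apply (hf i) (hs i)]

-- restrict of pi
lemma aux_restrict_pi {ι : Type*} [Fintype ι] {α : ι → Type*} [∀ i, MeasurableSpace (α i)]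
    (μ : ∀ i, Measure (α i)) [∀ i, SigmaFinite (μ i)] (s : ∀ i, Set (α i))
    (ht : ∀ i, MeasurableSet (s i)) :
    (Measure.pi μ).restrict (Set.pi univ s) = Measure.pi (fun i => (μ i).restrict (s i)) := by
  refine (Measure.pi_eq (μ := fun i => (μ i).restrict (s i)) fun t ht' => ?_).symm
  have hint : univ.pi t ∩ univ.pi s = univ.pi fun i => t i ∩ s i := by
    ext x; simp [Set.mem_pi, forall_and]
  rw [Measure.restrict_apply (MeasurableSet.univ_pi ht'), hint, Measure.pi_pi μ]
  exact Finset.prod_congr rfl fun i _ => (Measure.restrict_apply (ht' i)).symm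

-- 1D: coe to AddCircle 1 measure preserving from Ico 0 1
lemma aux_mp_mk : MeasurePreserving (((↑) : ℝ → AddCircle (1:ℝ)))
    ((volume : Measure ℝ).restrict (Ico 0 1)) volume := by
  have h := AddCircle.measurePreserving_mk 1 0
  rw [zero_add] at h
  have : (volume : Measure ℝ).restrict (Ico 0 1) = (volume : Measure ℝ).restrict (Ioc 0 1) :=
    Measure.restrict_congr_set Ico_ae_eq_Ioc
  rwa [← this] at h

-- pi version
lemma aux_mp_pi_mk (N : Type) [Fintype N] :
    MeasurePreserving (fun (u : N → ℝ) j => ((u j : ℝ) : AddCircle (1:ℝ)))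
      ((volume : Measure (N → ℝ)).restrict (Set.pi univ fun _ => Ico (0:ℝ) 1)) volume := by
  refine ⟨measurable_pi_lambda _ fun j =>
    aux_mp_mk.measurable.comp (measurable_pi_apply j), ?_⟩
  rw [(volume_pi : (volume : Measure (N → ℝ)) = _),
    aux_restrict_pi _ _ (fun _ => measurableSet_Ico),
    (volume_pi : (volume : Measure (N → AddCircle (1:ℝ))) = _)]
  exact aux_map_pi (fun _ => aux_mp_mk.measurable) (fun _ => aux_mp_mk.map_eq)

-- gcd shift invariance
lemma aux_gcd_shift {m : ℕ} (d : ℤ) (f g : Fin m → ℤ) (h : ∀ j, d ∣ (f j - g j)) :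
    GCDMonoid.gcd d (Finset.univ.gcd f) = GCDMonoid.gcd d (Finset.univ.gcd g) := by
  have H : ∀ (f g : Fin m → ℤ), (∀ j, d ∣ (f j - g j)) →
      GCDMonoid.gcd d (Finset.univ.gcd f) ∣ GCDMonoid.gcd d (Finset.univ.gcd g) := by
    intro f g h
    refine dvd_gcd (gcd_dvd_left _ _) (Finset.dvd_gcd fun j _ => ?_)
    have h1 : GCDMonoid.gcd d (Finset.univ.gcd f) ∣ f j :=
      (gcd_dvd_right _ _).trans (Finset.gcd_dvd (Finset.mem_univ j))
    have h2 : GCDMonoid.gcd d (Finset.univ.gcd f) ∣ f j - g j :=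
      (gcd_dvd_left _ _).trans (h j)
    simpa using dvd_sub h1 h2
  have hnn : ∀ (x y : ℤ), 0 ≤ GCDMonoid.gcd x y := by
    intro x y; rw [← Int.coe_gcd]; positivity
  exact Int.dvd_antisymm (hnn _ _) (hnn _ _) (H f g h)
    (H g f fun j => (dvd_sub_comm).mp (h j))

theorem stmt13 (n m : ℕ) (hn : 1 ≤ n) (hm : 1 ≤ m)
    (y : Fin m → ℝ) (δ : ℝ) (hδ0 : 0 ≤ δ) (hδ : δ < 1/2)
    (a : ℤ → Fin m → ℤ) (b : ℤ → ℕ)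
    (hab : ∀ d : ℤ, d ≠ 0 →
      GCDMonoid.gcd (Finset.univ.gcd (a d)) ((b d : ℤ)) = 1)
    (q : Fin n → ℤ) (hq : q ≠ 0) (d : ℤ) (hd : Finset.univ.gcd q = d) :
    volume {x : Fin n → Fin m → ℝ | (∀ i j, x i j ∈ Set.Ico (0:ℝ) 1) ∧
        ∃ p : Fin m → ℤ,
          (∀ j, |(∑ i, (q i : ℝ) * x i j) - p j - y j| < δ) ∧
          GCDMonoid.gcd (Finset.univ.gcd q)
            (Finset.univ.gcd (fun j => (b d : ℤ) * p j + a d j)) = 1} =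
    volume {x : Fin m → ℝ | (∀ j, x j ∈ Set.Ico (0:ℝ) 1) ∧
        ∃ p : Fin m → ℤ,
          (∀ j, |(d : ℝ) * x j - p j - y j| < δ) ∧
          GCDMonoid.gcd d
            (Finset.univ.gcd (fun j => (b d : ℤ) * p j + a d j)) = 1} := by
  classical
  -- basic setup
  have hd0 : d ≠ 0 := by
    rw [← hd]
    intro h
    exact hq (funext fun i => Finset.gcd_eq_zero_iff.mp h i (Finset.mem_univ i))
  set k : Fin n → ℤ := fun i => q i / d with hkdef
  have hk : ∀ i, q i = d * k i := fun i =>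
    (Int.mul_ediv_cancel' (hd ▸ Finset.gcd_dvd (Finset.mem_univ i))).symm
  obtain ⟨i0, hi0⟩ : ∃ i, q i ≠ 0 := by
    by_contra h
    push_neg at h
    exact hq (funext h)
  have hki0 : k i0 ≠ 0 := fun h => hi0 (by rw [hk i0, h, mul_zero])
  -- the predicate P
  set P : (Fin m → ℝ) → Prop := fun u => ∃ p : Fin m → ℤ,
      (∀ j, |(d:ℝ) * u j - p j - y j| < δ) ∧
      GCDMonoid.gcd d (Finset.univ.gcd fun j => (b d : ℤ) * p j + a d j) = 1 with hP
  -- invariance of P under integer shifts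
  have hinv : ∀ (u : Fin m → ℝ) (t : Fin m → ℤ), P u → P (fun j => u j + t j) := by
    rintro u t ⟨p, h1, h2⟩
    refine ⟨fun j => p j + d * t j, fun j => ?_, ?_⟩
    · have he : (d:ℝ) * (u j + (t j : ℤ)) - ((p j + d * t j : ℤ) : ℝ) - y j
          = (d:ℝ) * u j - p j - y j := by push_cast; ring
      rw [he]; exact h1 j
    · rw [aux_gcd_shift d (fun j => (b d : ℤ) * (p j + d * t j) + a d j)
        (fun j => (b d : ℤ) * p j + a d j) (fun j => ⟨(b d : ℤ) * t j, by ring⟩)]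
      exact h2
  have hinv2 : ∀ u v : Fin m → ℝ, (∀ j, ∃ t : ℤ, v j = u j + t) → (P u ↔ P v) := by
    intro u v h
    choose t ht using h
    constructor
    · intro hu
      have h' : v = fun j => u j + (t j : ℝ) := funext ht
      rw [h']
      exact hinv u t hu
    · intro hv
      have h'' : u = fun j => v j + ((-t j : ℤ) : ℝ) := by
        funext j; rw [ht j]; push_cast; ring
      rw [h'']
      exact hinv v (fun j => -t j) hv
  haveI : Fact ((0:ℝ) < 1) := ⟨zero_lt_one⟩
  -- coe equality gives integer shift
  have hcoe_eq : ∀ (r s : ℝ), ((r : AddCircle (1:ℝ)) = (s : AddCircle (1:ℝ))) →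
      ∃ t : ℤ, r = s + t := by
    intro r s h
    rw [QuotientAddGroup.eq_iff_sub_mem, AddSubgroup.mem_zmultiples_iff] at h
    obtain ⟨t, ht⟩ := h
    refine ⟨t, ?_⟩
    rw [zsmul_eq_mul, mul_one] at ht
    linarith
  -- representative map
  set ρ : (Fin m → AddCircle (1:ℝ)) → (Fin m → ℝ) :=
    fun z j => ((AddCircle.equivIco 1 0 (z j) : Ico (0:ℝ) (0+1)) : ℝ) with hρ
  have hρmeas : Measurable ρ := by
    refine measurable_pi_lambda _ fun j => ?_
    exact measurable_subtype_coe.comp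
      ((AddCircle.measurableEquivIco (T := 1) 0).measurable.comp (measurable_pi_apply j))
  have hρcoe : ∀ (z : Fin m → AddCircle (1:ℝ)) j, ((ρ z j : ℝ) : AddCircle (1:ℝ)) = z j := by
    intro z j
    exact (AddCircle.equivIco 1 0).symm_apply_apply (z j)
  -- measurability of {u | P u}
  have hSm : MeasurableSet {u : Fin m → ℝ | P u} := by
    have hrw : {u : Fin m → ℝ | P u} = ⋃ p : Fin m → ℤ,
        ((⋂ j, {u : Fin m → ℝ | |(d:ℝ) * u j - p j - y j| < δ}) ∩
          {u : Fin m → ℝ |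
            GCDMonoid.gcd d (Finset.univ.gcd fun j => (b d : ℤ) * p j + a d j) = 1}) := by
      ext u
      simp only [hP, Set.mem_setOf_eq, Set.mem_iUnion, Set.mem_inter_iff, Set.mem_iInter]
    rw [hrw]
    refine MeasurableSet.iUnion fun p => (MeasurableSet.iInter fun j => ?_).inter ?_
    · exact measurableSet_lt
        (Measurable.abs (by fun_prop :
          Measurable fun u : Fin m → ℝ => (d:ℝ) * u j - p j - y j)) measurable_const
    · by_cases h : GCDMonoid.gcd d (Finset.univ.gcd fun j => (b d : ℤ) * p j + a d j) = 1
      · simp [h]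
      · simp [h]
  -- the target set on the torus
  set T' : Set (Fin m → AddCircle (1:ℝ)) := ρ ⁻¹' {u | P u} with hT'def
  have hT' : MeasurableSet T' := hρmeas hSm
  -- membership characterisation
  have hmemT' : ∀ u : Fin m → ℝ, ((fun j => ((u j : ℝ) : AddCircle (1:ℝ))) ∈ T') ↔ P u := by
    intro u
    have hsh : ∀ j, ∃ t : ℤ, u j = ρ (fun j => ((u j : ℝ) : AddCircle (1:ℝ))) j + t := by
      intro j
      exact hcoe_eq _ _ (hρcoe (fun j => ((u j : ℝ) : AddCircle (1:ℝ))) j).symm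
    simp only [hT'def, Set.mem_preimage, Set.mem_setOf_eq]
    exact hinv2 _ u hsh
  -- the homomorphism on the torus
  set Φ : (Fin n → Fin m → AddCircle (1:ℝ)) →+ (Fin m → AddCircle (1:ℝ)) :=
    { toFun := fun z j => ∑ i, k i • z i j,
      map_zero' := by funext j; simp,
      map_add' := by
        intro z w
        funext j
        simp [smul_add, Finset.sum_add_distrib] } with hΦdef
  have hΦc : Continuous Φ := by
    refine continuous_pi fun j => ?_
    show Continuous fun z : Fin n → Fin m → AddCircle (1:ℝ) => ∑ i, k i • z i j
    exact continuous_finset_sum _ fun i _ =>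
      ((continuous_apply j).comp (continuous_apply i)).zsmul (k i)
  have hΦs : Function.Surjective Φ := by
    intro w
    refine ⟨fun i j => if i = i0 then DivisibleBy.div (w j) (k i0) else 0, ?_⟩
    funext j
    show (∑ i, k i • (if i = i0 then DivisibleBy.div (w j) (k i0) else 0)) = w j
    rw [Finset.sum_eq_single i0]
    · rw [if_pos rfl]
      exact DivisibleBy.div_cancel _ hki0
    · intro i _ hii0
      rw [if_neg hii0, smul_zero]
    · intro h
      exact absurd (Finset.mem_univ i0) h
  haveI hH1 : (volume : Measure (Fin m → AddCircle (1:ℝ))).IsAddHaarMeasure :=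
    Measure.pi.isAddHaarMeasure _
  haveI hH2 : (volume : Measure (Fin n → Fin m → AddCircle (1:ℝ))).IsAddHaarMeasure :=
    Measure.pi.isAddHaarMeasure _
  have hvol1 : (volume : Measure (Fin m → AddCircle (1:ℝ))) univ = 1 := by
    rw [(volume_pi : (volume : Measure (Fin m → AddCircle (1:ℝ))) = _), Measure.pi_univ]
    simp [AddCircle.measure_univ]
  have hvol2 : (volume : Measure (Fin n → Fin m → AddCircle (1:ℝ))) univ = 1 := by
    rw [(volume_pi : (volume : Measure (Fin n → Fin m → AddCircle (1:ℝ))) = _), Measure.pi_univ]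
    simp [hvol1]
  have hΦmp : MeasurePreserving Φ
      (volume : Measure (Fin n → Fin m → AddCircle (1:ℝ)))
      (volume : Measure (Fin m → AddCircle (1:ℝ))) :=
    AddMonoidHom.measurePreserving hΦc hΦs (by rw [hvol2, hvol1])
  -- the coordinatewise quotient map, measure preserving
  have hPInm : MeasurePreserving
      (fun (x : Fin n → Fin m → ℝ) i j => ((x i j : ℝ) : AddCircle (1:ℝ)))
      ((volume : Measure (Fin n → Fin m → ℝ)).restrict
        (Set.pi univ fun _ : Fin n => Set.pi univ fun _ : Fin m => Ico (0:ℝ) 1)) volume := by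
    refine ⟨measurable_pi_lambda _ fun i =>
      ((aux_mp_pi_mk (Fin m)).measurable).comp (measurable_pi_apply i), ?_⟩
    rw [(volume_pi : (volume : Measure (Fin n → Fin m → ℝ)) = _),
      aux_restrict_pi _ _ (fun _ => MeasurableSet.univ_pi fun _ => measurableSet_Ico),
      (volume_pi : (volume : Measure (Fin n → Fin m → AddCircle (1:ℝ))) = _)]
    exact aux_map_pi (fun _ => (aux_mp_pi_mk (Fin m)).measurable)
      (fun _ => (aux_mp_pi_mk (Fin m)).map_eq)
  have hΨmp : MeasurePreserving
      ((⇑Φ) ∘ fun (x : Fin n → Fin m → ℝ) i j => ((x i j : ℝ) : AddCircle (1:ℝ)))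
      ((volume : Measure (Fin n → Fin m → ℝ)).restrict
        (Set.pi univ fun _ : Fin n => Set.pi univ fun _ : Fin m => Ico (0:ℝ) 1)) volume :=
    hΦmp.comp hPInm
  -- identification of the sums
  have hL : ∀ (x : Fin n → Fin m → ℝ) (j : Fin m),
      (∑ i, (q i : ℝ) * x i j) = (d:ℝ) * ∑ i, (k i : ℝ) * x i j := by
    intro x j
    rw [Finset.mul_sum]
    refine Finset.sum_congr rfl fun i _ => ?_
    rw [hk i]
    push_cast
    ring
  have hΨcoe : ∀ (x : Fin n → Fin m → ℝ) (j : Fin m),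
      Φ (fun i j => ((x i j : ℝ) : AddCircle (1:ℝ))) j
        = ((∑ i, (k i : ℝ) * x i j : ℝ) : AddCircle (1:ℝ)) := by
    intro x j
    have hc : ((∑ i, (k i : ℝ) * x i j : ℝ) : AddCircle (1:ℝ))
        = ∑ i, k i • ((x i j : ℝ) : AddCircle (1:ℝ)) := by
      rw [show ((∑ i, (k i : ℝ) * x i j : ℝ) : AddCircle (1:ℝ))
          = (QuotientAddGroup.mk' (AddSubgroup.zmultiples (1:ℝ)))
              (∑ i, (k i : ℝ) * x i j) from rfl, map_sum]
      refine Finset.sum_congr rfl fun i _ => ?_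
      rw [← zsmul_eq_mul, map_zsmul]
      rfl
    rw [hc]
    rfl
  -- rewriting the right-hand set
  have hR : {x : Fin m → ℝ | (∀ j, x j ∈ Set.Ico (0:ℝ) 1) ∧
        ∃ p : Fin m → ℤ,
          (∀ j, |(d : ℝ) * x j - p j - y j| < δ) ∧
          GCDMonoid.gcd d
            (Finset.univ.gcd (fun j => (b d : ℤ) * p j + a d j)) = 1}
      = (Set.pi univ fun _ : Fin m => Ico (0:ℝ) 1) ∩
        ((fun (u : Fin m → ℝ) j => ((u j : ℝ) : AddCircle (1:ℝ))) ⁻¹' T') := by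
    ext u
    simp only [Set.mem_setOf_eq, Set.mem_inter_iff, Set.mem_preimage, Set.mem_pi,
      Set.mem_univ, true_implies]
    constructor
    · rintro ⟨h1, h2⟩
      exact ⟨h1, (hmemT' u).mpr h2⟩
    · rintro ⟨h1, h2⟩
      exact ⟨h1, (hmemT' u).mp h2⟩
  -- rewriting the left-hand set
  have hLset : {x : Fin n → Fin m → ℝ | (∀ i j, x i j ∈ Set.Ico (0:ℝ) 1) ∧
        ∃ p : Fin m → ℤ,
          (∀ j, |(∑ i, (q i : ℝ) * x i j) - p j - y j| < δ) ∧
          GCDMonoid.gcd (Finset.univ.gcd q)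
            (Finset.univ.gcd (fun j => (b d : ℤ) * p j + a d j)) = 1}
      = (Set.pi univ fun _ : Fin n => Set.pi univ fun _ : Fin m => Ico (0:ℝ) 1) ∩
        (((⇑Φ) ∘ fun (x : Fin n → Fin m → ℝ) i j => ((x i j : ℝ) : AddCircle (1:ℝ))) ⁻¹' T') := by
    ext x
    have hmem : ((⇑Φ) ∘ fun (x : Fin n → Fin m → ℝ) i j => ((x i j : ℝ) : AddCircle (1:ℝ))) x ∈ T'
        ↔ P (fun j => ∑ i, (k i : ℝ) * x i j) := by
      have heq : ((⇑Φ) ∘ fun (x : Fin n → Fin m → ℝ) i j => ((x i j : ℝ) : AddCircle (1:ℝ))) x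
          = fun j => ((∑ i, (k i : ℝ) * x i j : ℝ) : AddCircle (1:ℝ)) := funext (hΨcoe x)
      rw [heq]
      exact hmemT' _
    simp only [Set.mem_setOf_eq, Set.mem_inter_iff, Set.mem_preimage, Set.mem_pi,
      Set.mem_univ, true_implies]
    rw [hmem]
    constructor
    · rintro ⟨h1, p, hp1, hp2⟩
      refine ⟨fun i j => h1 i j, p, fun j => ?_, ?_⟩
      · rw [← hL x j]
        exact hp1 j
      · rw [hd] at hp2
        exact hp2
    · rintro ⟨h1, p, hp1, hp2⟩
      refine ⟨fun i j => h1 i j, p, fun j => ?_, ?_⟩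
      · rw [hL x j]
        exact hp1 j
      · rw [hd]
        exact hp2
  -- final computation
  have hcubeN : MeasurableSet
      (Set.pi univ fun _ : Fin n => Set.pi univ fun _ : Fin m => Ico (0:ℝ) 1) :=
    MeasurableSet.univ_pi fun _ => MeasurableSet.univ_pi fun _ => measurableSet_Ico
  have hcubeM : MeasurableSet (Set.pi univ fun _ : Fin m => Ico (0:ℝ) 1) :=
    MeasurableSet.univ_pi fun _ => measurableSet_Ico
  rw [hLset, hR]
  calc volume ((Set.pi univ fun _ : Fin n => Set.pi univ fun _ : Fin m => Ico (0:ℝ) 1) ∩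
        (((⇑Φ) ∘ fun (x : Fin n → Fin m → ℝ) i j => ((x i j : ℝ) : AddCircle (1:ℝ))) ⁻¹' T'))
      = ((volume : Measure (Fin n → Fin m → ℝ)).restrict
          (Set.pi univ fun _ : Fin n => Set.pi univ fun _ : Fin m => Ico (0:ℝ) 1))
          ((((⇑Φ) ∘ fun (x : Fin n → Fin m → ℝ) i j => ((x i j : ℝ) : AddCircle (1:ℝ))) ⁻¹' T')) := by
        rw [Measure.restrict_apply' hcubeN, Set.inter_comm]
    _ = volume T' := hΨmp.measure_preimage hT'.nullMeasurableSet
    _ = ((volume : Measure (Fin m → ℝ)).restrict (Set.pi univ fun _ : Fin m => Ico (0:ℝ) 1))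
          ((fun (u : Fin m → ℝ) j => ((u j : ℝ) : AddCircle (1:ℝ))) ⁻¹' T') :=
        ((aux_mp_pi_mk (Fin m)).measure_preimage hT'.nullMeasurableSet).symm
    _ = volume ((Set.pi univ fun _ : Fin m => Ico (0:ℝ) 1) ∩
          ((fun (u : Fin m → ℝ) j => ((u j : ℝ) : AddCircle (1:ℝ))) ⁻¹' T')) := by
        rw [Measure.restrict_apply' hcubeM, Set.inter_comm]
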